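/- Given a commutative square k ∘ f = g ∘ h of functors where f : A ⟶ B underlies a twisted coreflection (f ⊣ q, ε) and g : C ⟶ D underlies a delta lens (g, ψ), there exists a functor j : B ⟶ C with j ∘ f = h and g ∘ j = k. -/

import Mathlib

open CategoryTheory

structure DeltaLens {A B : Type*} [Category A] [Category B] (f : A ⥤ B) where
  tgt : ∀ (a : A) {b : B}, (f.obj a ⟶ b) → A
  lift : ∀ (a : A) {b : B} (u : f.obj a ⟶ b), a ⟶ tgt a u
  tgt_obj : ∀ (a : A) {b : B} (u : f.obj a ⟶ b), f.obj (tgt a u) = b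
  map_lift : ∀ (a : A) {b : B} (u : f.obj a ⟶ b),
    f.map (lift a u) = u ≫ eqToHom (tgt_obj a u).symm
  tgt_id : ∀ a : A, tgt a (𝟙 (f.obj a)) = a
  lift_id : ∀ a : A, lift a (𝟙 (f.obj a)) = eqToHom (tgt_id a).symm
  tgt_comp : ∀ (a : A) {b c : B} (u : f.obj a ⟶ b) (v : b ⟶ c),
    tgt a (u ≫ v) = tgt (tgt a u) (eqToHom (tgt_obj a u) ≫ v)
  lift_comp : ∀ (a : A) {b c : B} (u : f.obj a ⟶ b) (v : b ⟶ c),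
    lift a (u ≫ v) =
      lift a u ≫ lift (tgt a u) (eqToHom (tgt_obj a u) ≫ v) ≫ eqToHom (tgt_comp a u v).symm
structure SplitCoreflection (A B : Type*) [Category A] [Category B] where
  f : A ⥤ B
  q : B ⥤ A
  ε : q ⋙ f ⟶ 𝟭 B
  qf : f ⋙ q = 𝟭 A
  q_ε : ∀ x : B, q.map (ε.app x) = eqToHom (Functor.congr_obj qf (q.obj x))
  ε_f : ∀ a : A, ε.app (f.obj a) = eqToHom (congrArg f.obj (Functor.congr_obj qf a))
/-- A morphism "is an identity" if it is an `eqToHom`. -/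
def IsIdLike {C : Type*} [Category C] {x y : C} (w : x ⟶ y) : Prop :=
  ∃ h : x = y, w = eqToHom h
/-- A split coreflection is twisted if every morphism whose image under `q` is not an
identity factors uniquely through the counit as in the twisted condition. -/
def SplitCoreflection.IsTwisted {A B : Type*} [Category A] [Category B]
    (S : SplitCoreflection A B) : Prop :=
  ∀ {x y : B} (u : x ⟶ y), ¬ IsIdLike (S.q.map u) →
    ∃! uh : x ⟶ S.f.obj (S.q.obj x),
      S.ε.app x ≫ uh = 𝟙 (S.f.obj (S.q.obj x)) ∧
      u = uh ≫ S.f.map (S.q.map u) ≫ S.ε.app y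

namespace Stmt16Aux

open CategoryTheory

variable {A B C D : Type} [SmallCategory A] [SmallCategory B]
    [SmallCategory C] [SmallCategory D]

section Lens

variable {g : C ⥤ D} (L : DeltaLens g)

theorem tgt_eqToHom (a : C) {b : D} (hb : g.obj a = b) :
    L.tgt a (eqToHom hb) = a := by subst hb; exact L.tgt_id a

theorem lift_eqToHom (a : C) {b : D} (hb : g.obj a = b) :
    L.lift a (eqToHom hb) = eqToHom (tgt_eqToHom L a hb).symm := by
  subst hb; exact L.lift_id a

theorem tgt_congr {a a' : C} {b b' : D} (ha : a = a') (hb : b = b')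
    {u : g.obj a ⟶ b} {u' : g.obj a' ⟶ b'}
    (hu : u = eqToHom (congrArg g.obj ha) ≫ u' ≫ eqToHom hb.symm) :
    L.tgt a u = L.tgt a' u' := by
  subst ha; subst hb; simp at hu; subst hu; rfl

theorem lift_congr {a a' : C} {b b' : D} (ha : a = a') (hb : b = b')
    {u : g.obj a ⟶ b} {u' : g.obj a' ⟶ b'}
    (hu : u = eqToHom (congrArg g.obj ha) ≫ u' ≫ eqToHom hb.symm) :
    L.lift a u = eqToHom ha ≫ L.lift a' u' ≫ eqToHom (tgt_congr L ha hb hu).symm := by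
  subst ha; subst hb; simp at hu; subst hu; simp

theorem tgt_comp' {a a' : C} {b c : D} (u : g.obj a ⟶ b) (v : b ⟶ c)
    (ha : L.tgt a u = a') (hb : g.obj a' = b) :
    L.tgt a (u ≫ v) = L.tgt a' (eqToHom hb ≫ v) := by
  subst ha; exact L.tgt_comp a u v

theorem lift_comp' {a a' : C} {b c : D} (u : g.obj a ⟶ b) (v : b ⟶ c)
    (ha : L.tgt a u = a') (hb : g.obj a' = b) :
    L.lift a (u ≫ v) = L.lift a u ≫ eqToHom ha ≫ L.lift a' (eqToHom hb ≫ v)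
      ≫ eqToHom (tgt_comp' L u v ha hb).symm := by
  subst ha; simpa using L.lift_comp a u v

theorem tgt_post {a : C} {b b' : D} (u : g.obj a ⟶ b) (hb : b = b') :
    L.tgt a (u ≫ eqToHom hb) = L.tgt a u := by subst hb; simp

theorem lift_post {a : C} {b b' : D} (u : g.obj a ⟶ b) (hb : b = b') :
    L.lift a (u ≫ eqToHom hb) = L.lift a u ≫ eqToHom (tgt_post L u hb).symm := by
  subst hb; simp

theorem tgt_arg {a : C} {b : D} {u u' : g.obj a ⟶ b} (huu : u = u') :
    L.tgt a u = L.tgt a u' := by rw [huu]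

theorem lift_arg {a : C} {b : D} {u u' : g.obj a ⟶ b} (huu : u = u') :
    L.lift a u = L.lift a u' ≫ eqToHom (tgt_arg L huu).symm := by
  subst huu; simp

end Lens

end Stmt16Aux
namespace Stmt16Aux
open CategoryTheory

section Square

variable {A B C D : Type} [SmallCategory A] [SmallCategory B]
    [SmallCategory C] [SmallCategory D]
variable {S : SplitCoreflection A B} {g : C ⥤ D} (L : DeltaLens g)
  {h : A ⥤ C} {k : B ⥤ D} (hsq : S.f ⋙ k = h ⋙ g)

include hsq

theorem e0 (x : B) : g.obj (h.obj (S.q.obj x)) = k.obj (S.f.obj (S.q.obj x)) :=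
  (Functor.congr_obj hsq (S.q.obj x)).symm

def keps (x : B) : g.obj (h.obj (S.q.obj x)) ⟶ k.obj x :=
  eqToHom (e0 hsq x) ≫ k.map (S.ε.app x)

def jobj (x : B) : C :=
  L.tgt (h.obj (S.q.obj x)) (keps hsq x)

theorem g_jobj (x : B) : g.obj (jobj L hsq x) = k.obj x := L.tgt_obj _ _

def psi (x : B) : h.obj (S.q.obj x) ⟶ jobj L hsq x := L.lift _ (keps hsq x)

theorem g_psi (x : B) :
    g.map (psi L hsq x) = keps hsq x ≫ eqToHom (g_jobj L hsq x).symm :=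
  L.map_lift _ _

theorem keps_nat {x y : B} (u : x ⟶ y) :
    keps hsq x ≫ k.map u = g.map (h.map (S.q.map u)) ≫ keps hsq y := by
  have hn : S.ε.app x ≫ u = S.f.map (S.q.map u) ≫ S.ε.app y := (S.ε.naturality u).symm
  have hk := Functor.congr_hom hsq (S.q.map u)
  simp only [Functor.comp_map] at hk
  rw [keps, keps, Category.assoc, ← k.map_comp, hn, k.map_comp, hk]
  simp

theorem keps_hat {x : B} {w : x ⟶ S.f.obj (S.q.obj x)}
    (hw : S.ε.app x ≫ w = 𝟙 (S.f.obj (S.q.obj x))) :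
    keps hsq x ≫ k.map w = eqToHom (e0 hsq x) := by
  simp [keps, ← k.map_comp, hw]

theorem tgt_M (x : B) {d : D} (w : k.obj x ⟶ d) :
    L.tgt (h.obj (S.q.obj x)) (keps hsq x ≫ w)
      = L.tgt (jobj L hsq x) (eqToHom (g_jobj L hsq x) ≫ w) :=
  tgt_comp' L (keps hsq x) w rfl (g_jobj L hsq x)

theorem lift_M (x : B) {d : D} (w : k.obj x ⟶ d) :
    L.lift (h.obj (S.q.obj x)) (keps hsq x ≫ w)
      = psi L hsq x ≫ L.lift (jobj L hsq x) (eqToHom (g_jobj L hsq x) ≫ w)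
          ≫ eqToHom (tgt_M L hsq x w).symm := by
  simpa [psi, jobj] using lift_comp' L (keps hsq x) w rfl (g_jobj L hsq x)

theorem tgt_hat {x : B} {w : x ⟶ S.f.obj (S.q.obj x)}
    (hw : S.ε.app x ≫ w = 𝟙 (S.f.obj (S.q.obj x))) :
    L.tgt (jobj L hsq x) (eqToHom (g_jobj L hsq x) ≫ k.map w) = h.obj (S.q.obj x) := by
  rw [← tgt_M, keps_hat hsq hw, tgt_eqToHom]

theorem psi_hat {x : B} {w : x ⟶ S.f.obj (S.q.obj x)}
    (hw : S.ε.app x ≫ w = 𝟙 (S.f.obj (S.q.obj x))) :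
    psi L hsq x ≫ L.lift (jobj L hsq x) (eqToHom (g_jobj L hsq x) ≫ k.map w)
      = eqToHom (tgt_hat L hsq hw).symm := by
  have hM := lift_M L hsq x (k.map w)
  calc psi L hsq x ≫ L.lift (jobj L hsq x) (eqToHom (g_jobj L hsq x) ≫ k.map w)
      = (psi L hsq x ≫ L.lift (jobj L hsq x) (eqToHom (g_jobj L hsq x) ≫ k.map w)
          ≫ eqToHom (tgt_M L hsq x (k.map w)).symm) ≫ eqToHom (tgt_M L hsq x (k.map w)) := by
        simp
    _ = L.lift (h.obj (S.q.obj x)) (keps hsq x ≫ k.map w)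
          ≫ eqToHom (tgt_M L hsq x (k.map w)) := by rw [← hM]
    _ = (L.lift (h.obj (S.q.obj x)) (eqToHom (e0 hsq x))
          ≫ eqToHom (tgt_arg L (keps_hat hsq hw)).symm)
          ≫ eqToHom (tgt_M L hsq x (k.map w)) := by
        rw [← lift_arg L (keps_hat hsq hw)]
    _ = eqToHom (tgt_hat L hsq hw).symm := by
        rw [lift_eqToHom]; simp
theorem tgt_idlike {x y : B} {u : x ⟶ y} (hq : S.q.obj x = S.q.obj y)
    (he : S.q.map u = eqToHom hq) :
    L.tgt (jobj L hsq x) (eqToHom (g_jobj L hsq x) ≫ k.map u) = jobj L hsq y := by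
  rw [← tgt_M, tgt_arg L (keps_nat hsq u)]
  exact tgt_congr L (congrArg h.obj hq) rfl (by rw [he]; simp [eqToHom_map])

theorem psi_idlike {x y : B} {u : x ⟶ y} (hq : S.q.obj x = S.q.obj y)
    (he : S.q.map u = eqToHom hq) :
    psi L hsq x ≫ L.lift (jobj L hsq x) (eqToHom (g_jobj L hsq x) ≫ k.map u)
      = eqToHom (congrArg h.obj hq) ≫ psi L hsq y ≫ eqToHom (tgt_idlike L hsq hq he).symm := by
  have hM := lift_M L hsq x (k.map u)
  have h1 : keps hsq x ≫ k.map u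
      = eqToHom (congrArg g.obj (congrArg h.obj hq)) ≫ keps hsq y ≫ eqToHom (rfl :
          k.obj y = k.obj y).symm := by
    rw [keps_nat hsq u, he]; simp [eqToHom_map]
  calc psi L hsq x ≫ L.lift (jobj L hsq x) (eqToHom (g_jobj L hsq x) ≫ k.map u)
      = (psi L hsq x ≫ L.lift (jobj L hsq x) (eqToHom (g_jobj L hsq x) ≫ k.map u)
          ≫ eqToHom (tgt_M L hsq x (k.map u)).symm) ≫ eqToHom (tgt_M L hsq x (k.map u)) := by
        simp
    _ = L.lift (h.obj (S.q.obj x)) (keps hsq x ≫ k.map u)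
          ≫ eqToHom (tgt_M L hsq x (k.map u)) := by rw [← hM]
    _ = (eqToHom (congrArg h.obj hq) ≫ L.lift (h.obj (S.q.obj y)) (keps hsq y)
          ≫ eqToHom (tgt_congr L (congrArg h.obj hq) rfl h1).symm)
          ≫ eqToHom (tgt_M L hsq x (k.map u)) := by
        rw [← lift_congr L (congrArg h.obj hq) rfl h1]
    _ = eqToHom (congrArg h.obj hq) ≫ psi L hsq y ≫ eqToHom (tgt_idlike L hsq hq he).symm := by
        simp [psi]; rfl
variable (hS : S.IsTwisted)

open Classical in
noncomputable def jmap {x y : B} (u : x ⟶ y) : jobj L hsq x ⟶ jobj L hsq y :=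
  if hid : IsIdLike (S.q.map u) then
    L.lift (jobj L hsq x) (eqToHom (g_jobj L hsq x) ≫ k.map u)
      ≫ eqToHom (tgt_idlike L hsq hid.choose hid.choose_spec)
  else
    L.lift (jobj L hsq x) (eqToHom (g_jobj L hsq x) ≫ k.map ((hS u hid).exists.choose))
      ≫ eqToHom (tgt_hat L hsq ((hS u hid).exists.choose_spec).1)
      ≫ h.map (S.q.map u) ≫ psi L hsq y

include hS

theorem jmap_idlike {x y : B} {u : x ⟶ y} (hq : S.q.obj x = S.q.obj y)
    (he : S.q.map u = eqToHom hq) :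
    jmap L hsq hS u = L.lift (jobj L hsq x) (eqToHom (g_jobj L hsq x) ≫ k.map u)
      ≫ eqToHom (tgt_idlike L hsq hq he) := by
  unfold jmap; rw [dif_pos ⟨hq, he⟩]

theorem jmap_nonid {x y : B} {u : x ⟶ y} (hid : ¬ IsIdLike (S.q.map u))
    {w : x ⟶ S.f.obj (S.q.obj x)} (h1 : S.ε.app x ≫ w = 𝟙 (S.f.obj (S.q.obj x)))
    (h2 : u = w ≫ S.f.map (S.q.map u) ≫ S.ε.app y) :
    jmap L hsq hS u = L.lift (jobj L hsq x) (eqToHom (g_jobj L hsq x) ≫ k.map w)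
      ≫ eqToHom (tgt_hat L hsq h1) ≫ h.map (S.q.map u) ≫ psi L hsq y := by
  obtain rfl : w = (hS u hid).exists.choose :=
    (hS u hid).unique ⟨h1, h2⟩ (hS u hid).exists.choose_spec
  unfold jmap; rw [dif_neg hid]

theorem g_jmap {x y : B} (u : x ⟶ y) :
    g.map (jmap L hsq hS u)
      = eqToHom (g_jobj L hsq x) ≫ k.map u ≫ eqToHom (g_jobj L hsq y).symm := by
  by_cases hid : IsIdLike (S.q.map u)
  · obtain ⟨hq, he⟩ := hid
    rw [jmap_idlike L hsq hS hq he]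
    rw [g.map_comp, L.map_lift, eqToHom_map]
    simp
  · obtain ⟨h1, h2⟩ := (hS u hid).exists.choose_spec
    rw [jmap_nonid L hsq hS hid h1 h2]
    have hk := Functor.congr_hom hsq (S.q.map u)
    simp only [Functor.comp_map] at hk
    have hg : g.map (h.map (S.q.map u))
        = eqToHom (e0 hsq x) ≫ k.map (S.f.map (S.q.map u)) ≫ eqToHom (e0 hsq y).symm := by
      rw [hk]; simp [e0]
    simp only [g.map_comp, L.map_lift, eqToHom_map, g_psi, hg, keps]
    conv_rhs => rw [h2]
    simp [k.map_comp]
theorem jmap_id (x : B) : jmap L hsq hS (𝟙 x) = 𝟙 (jobj L hsq x) := by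
  rw [jmap_idlike L hsq hS rfl (by simp)]
  rw [lift_arg L (show eqToHom (g_jobj L hsq x) ≫ k.map (𝟙 x)
      = eqToHom (g_jobj L hsq x) from by simp)]
  rw [lift_eqToHom]; simp

omit hS in
theorem hat_comp {x y z : B} (u : x ⟶ y) (v : y ⟶ z) {w : x ⟶ S.f.obj (S.q.obj x)}
    (h2 : u = w ≫ S.f.map (S.q.map u) ≫ S.ε.app y) :
    u ≫ v = w ≫ S.f.map (S.q.map (u ≫ v)) ≫ S.ε.app z := by
  conv_lhs => rw [h2]
  simp only [Category.assoc]
  have hnat : S.ε.app y ≫ v = S.f.map (S.q.map v) ≫ S.ε.app z := (S.ε.naturality v).symm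
  rw [hnat]
  simp

omit hS in
theorem not_idlike_left {x y z : B} {u : x ⟶ y} {v : y ⟶ z} (hq : S.q.obj x = S.q.obj y)
    (he : S.q.map u = eqToHom hq) (hv : ¬ IsIdLike (S.q.map v)) :
    ¬ IsIdLike (S.q.map (u ≫ v)) := by
  rintro ⟨hh, hhe⟩
  refine hv ⟨hq.symm.trans hh, ?_⟩
  have hv' : S.q.map v = eqToHom hq.symm ≫ S.q.map (u ≫ v) := by
    rw [S.q.map_comp, he]; simp
  rw [hv', hhe]; simp

omit hS in
theorem not_idlike_right {x y z : B} {u : x ⟶ y} {v : y ⟶ z} (hq : S.q.obj y = S.q.obj z)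
    (he : S.q.map v = eqToHom hq) (hu : ¬ IsIdLike (S.q.map u)) :
    ¬ IsIdLike (S.q.map (u ≫ v)) := by
  rintro ⟨hh, hhe⟩
  refine hu ⟨hh.trans hq.symm, ?_⟩
  have hu' : S.q.map u = S.q.map (u ≫ v) ≫ eqToHom hq.symm := by
    rw [S.q.map_comp, he]; simp
  rw [hu', hhe]; simp
set_option maxHeartbeats 1000000 in
theorem jmap_comp {x y z : B} (u : x ⟶ y) (v : y ⟶ z) :
    jmap L hsq hS (u ≫ v) = jmap L hsq hS u ≫ jmap L hsq hS v := by
  by_cases hu : IsIdLike (S.q.map u) <;> by_cases hv : IsIdLike (S.q.map v)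
  · -- both id-like
    obtain ⟨hqu, heu⟩ := hu
    obtain ⟨hqv, hev⟩ := hv
    rw [jmap_idlike L hsq hS (hqu.trans hqv) (by simp [heu, hev]),
        jmap_idlike L hsq hS hqu heu, jmap_idlike L hsq hS hqv hev]
    rw [lift_arg L (show eqToHom (g_jobj L hsq x) ≫ k.map (u ≫ v)
        = (eqToHom (g_jobj L hsq x) ≫ k.map u) ≫ k.map v from by simp)]
    rw [lift_comp' L _ _ (tgt_idlike L hsq hqu heu) (g_jobj L hsq y)]
    simp
  · -- u id-like, v not
    obtain ⟨hq, heu⟩ := hu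
    have huv := not_idlike_left hsq hq heu hv
    obtain ⟨hv1, hv2⟩ := (hS v hv).exists.choose_spec
    set vh := (hS v hv).exists.choose with hvh
    have hnat : S.ε.app x ≫ u = S.f.map (S.q.map u) ≫ S.ε.app y := (S.ε.naturality u).symm
    have h1 : S.ε.app x ≫ u ≫ vh ≫ eqToHom (congrArg S.f.obj hq.symm)
        = 𝟙 (S.f.obj (S.q.obj x)) := by
      rw [← Category.assoc, hnat, heu, eqToHom_map, Category.assoc, reassoc_of% hv1]
      simp
    have h2 : u ≫ v = (u ≫ vh ≫ eqToHom (congrArg S.f.obj hq.symm))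
        ≫ S.f.map (S.q.map (u ≫ v)) ≫ S.ε.app z := by
      conv_lhs => rw [hv2]
      simp [heu, eqToHom_map]
    rw [jmap_nonid L hsq hS huv h1 h2, jmap_idlike L hsq hS hq heu,
        jmap_nonid L hsq hS hv hv1 hv2]
    rw [lift_arg L (show eqToHom (g_jobj L hsq x)
          ≫ k.map (u ≫ vh ≫ eqToHom (congrArg S.f.obj hq.symm))
        = (eqToHom (g_jobj L hsq x) ≫ k.map u)
          ≫ (k.map vh ≫ eqToHom (congrArg k.obj (congrArg S.f.obj hq.symm)))
        from by simp [eqToHom_map])]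
    rw [lift_comp' L _ _ (tgt_idlike L hsq hq heu) (g_jobj L hsq y)]
    rw [lift_arg L (show eqToHom (g_jobj L hsq y)
          ≫ k.map vh ≫ eqToHom (congrArg k.obj (congrArg S.f.obj hq.symm))
        = (eqToHom (g_jobj L hsq y) ≫ k.map vh)
          ≫ eqToHom (congrArg k.obj (congrArg S.f.obj hq.symm)) from by simp)]
    rw [lift_post L]
    simp [heu, eqToHom_map]
  · -- u not, v id-like
    obtain ⟨hqv, hev⟩ := hv
    have huv := not_idlike_right hsq hqv hev hu
    obtain ⟨hu1, hu2⟩ := (hS u hu).exists.choose_spec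
    have h2 := hat_comp hsq u v hu2
    rw [jmap_nonid L hsq hS huv hu1 h2, jmap_nonid L hsq hS hu hu1 hu2,
        jmap_idlike L hsq hS hqv hev]
    simp only [Category.assoc]
    rw [reassoc_of% (psi_idlike L hsq hqv hev)]
    simp [hev, eqToHom_map]
  · -- u not, v not
    obtain ⟨hu1, hu2⟩ := (hS u hu).exists.choose_spec
    obtain ⟨hv1, hv2⟩ := (hS v hv).exists.choose_spec
    have h2 := hat_comp hsq u v hu2
    by_cases huv : IsIdLike (S.q.map (u ≫ v))
    · obtain ⟨hq, he⟩ := huv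
      rw [jmap_idlike L hsq hS hq he, jmap_nonid L hsq hS hu hu1 hu2,
          jmap_nonid L hsq hS hv hv1 hv2]
      simp only [Category.assoc]
      rw [reassoc_of% (psi_hat L hsq hv1)]
      have harg : eqToHom (g_jobj L hsq x) ≫ k.map (u ≫ v)
          = (eqToHom (g_jobj L hsq x) ≫ k.map ((hS u hu).exists.choose))
            ≫ (eqToHom (congrArg k.obj (congrArg S.f.obj hq)) ≫ k.map (S.ε.app z)) := by
        conv_lhs => rw [h2]
        simp [he, eqToHom_map]
      rw [lift_arg L harg]
      rw [lift_comp' L _ _ (tgt_hat L hsq hu1) (e0 hsq x)]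
      have hinner : eqToHom (e0 hsq x)
            ≫ eqToHom (congrArg k.obj (congrArg S.f.obj hq)) ≫ k.map (S.ε.app z)
          = eqToHom (congrArg g.obj (congrArg h.obj hq)) ≫ keps hsq z
            ≫ eqToHom (rfl : k.obj z = k.obj z).symm := by
        simp [keps]
      rw [lift_congr L (congrArg h.obj hq) rfl hinner]
      have hmid : h.map (S.q.map u) ≫ h.map (S.q.map v) = eqToHom (congrArg h.obj hq) := by
        rw [← h.map_comp, ← S.q.map_comp, he]; simp [eqToHom_map]
      simp only [Category.assoc, eqToHom_trans, eqToHom_trans_assoc, eqToHom_refl, Category.id_comp]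
      rw [reassoc_of% hmid]
      simp [psi, jobj]
      congr 1
      rw [← Category.assoc]
      congr 1
      exact (eqToHom_trans _ _).symm
    · rw [jmap_nonid L hsq hS huv hu1 h2, jmap_nonid L hsq hS hu hu1 hu2,
          jmap_nonid L hsq hS hv hv1 hv2]
      simp only [Category.assoc]
      rw [reassoc_of% (psi_hat L hsq hv1)]
      simp
omit hS in
theorem keps_f (a : A) : keps hsq (S.f.obj a)
    = eqToHom ((e0 hsq (S.f.obj a)).trans
        (congrArg k.obj (congrArg S.f.obj (Functor.congr_obj S.qf a)))) := by
  rw [keps, S.ε_f]; simp [eqToHom_map]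

omit hS in
theorem jobj_f (a : A) : jobj L hsq (S.f.obj a) = h.obj a := by
  rw [jobj, tgt_arg L (keps_f hsq a), tgt_eqToHom]
  exact congrArg h.obj (Functor.congr_obj S.qf a)

omit hS in
theorem psi_f (a : A) : psi L hsq (S.f.obj a)
    = eqToHom ((congrArg h.obj (Functor.congr_obj S.qf a)).trans (jobj_f L hsq a).symm) := by
  rw [psi, lift_arg L (keps_f hsq a), lift_eqToHom]; simp; rfl

theorem jmap_f {a a' : A} (m : a ⟶ a') :
    jmap L hsq hS (S.f.map m)
      = eqToHom (jobj_f L hsq a) ≫ h.map m ≫ eqToHom (jobj_f L hsq a').symm := by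
  have hqf := Functor.congr_hom S.qf m
  simp only [Functor.comp_map, Functor.id_map] at hqf
  by_cases hid : IsIdLike (S.q.map (S.f.map m))
  · obtain ⟨hq, he⟩ := hid
    have ham : a = a' :=
      (Functor.congr_obj S.qf a).symm.trans (hq.trans (Functor.congr_obj S.qf a'))
    subst ham
    have hm : m = 𝟙 a := by
      have h3 : m = eqToHom (Functor.congr_obj S.qf a).symm ≫ S.q.map (S.f.map m)
          ≫ eqToHom (Functor.congr_obj S.qf a) := by rw [hqf]; simp
      rw [h3, he]; simp
    rw [hm, S.f.map_id, jmap_id L hsq hS]; simp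
  · have h1 : S.ε.app (S.f.obj a)
        ≫ eqToHom (congrArg S.f.obj (Functor.congr_obj S.qf a).symm)
        = 𝟙 (S.f.obj (S.q.obj (S.f.obj a))) := by
      rw [S.ε_f]; simp
    have h2 : S.f.map m = eqToHom (congrArg S.f.obj (Functor.congr_obj S.qf a).symm)
        ≫ S.f.map (S.q.map (S.f.map m)) ≫ S.ε.app (S.f.obj a') := by
      rw [hqf, S.ε_f]; simp [eqToHom_map]
    rw [jmap_nonid L hsq hS hid h1 h2]
    rw [lift_arg L (show eqToHom (g_jobj L hsq (S.f.obj a))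
          ≫ k.map (eqToHom (congrArg S.f.obj (Functor.congr_obj S.qf a).symm))
        = eqToHom ((g_jobj L hsq (S.f.obj a)).trans
            (congrArg k.obj (congrArg S.f.obj (Functor.congr_obj S.qf a).symm)))
        from by simp [eqToHom_map])]
    rw [lift_eqToHom, psi_f, hqf]
    simp [eqToHom_map]
end Square

end Stmt16Aux

/-- Twisted coreflections lift against delta lenses: every commutative square from a
twisted coreflection to a delta lens admits a diagonal filler. -/
theorem stmt16 {A B C D : Type} [SmallCategory A] [SmallCategory B]
    [SmallCategory C] [SmallCategory D]
    (S : SplitCoreflection A B) (hS : S.IsTwisted)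
    {g : C ⥤ D} (L : DeltaLens g) (h : A ⥤ C) (k : B ⥤ D)
    (hsq : S.f ⋙ k = h ⋙ g) :
    ∃ j : B ⥤ C, S.f ⋙ j = h ∧ j ⋙ g = k := by
  refine ⟨{ obj := Stmt16Aux.jobj L hsq,
            map := fun u => Stmt16Aux.jmap L hsq hS u,
            map_id := Stmt16Aux.jmap_id L hsq hS,
            map_comp := Stmt16Aux.jmap_comp L hsq hS }, ?_, ?_⟩
  · exact CategoryTheory.Functor.ext (fun a => Stmt16Aux.jobj_f L hsq a)
      (fun a a' m => Stmt16Aux.jmap_f L hsq hS m)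
  · exact CategoryTheory.Functor.ext (fun x => Stmt16Aux.g_jobj L hsq x)
      (fun x y u => Stmt16Aux.g_jmap L hsq hS u)
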